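/- arXiv:2309.00069 — 3 statements merged into one kernel-verified Lean document; each statement's English description precedes it below -/
import Mathlib

section
/- Let A, Â be bounded linear operators on a Banach space X with ‖e^{tA}‖, ‖e^{tÂ}‖ ≤ M for t ∈ [0, h]. Then for each p ≥ 1, ‖φ_p(hA) − φ_p(hÂ)‖_{L(X)} ≤ M² h ‖A − Â‖/(p−1)!, where φ_p(B) = ∫_0^1 e^{(1-θ)B} θ^{p-1}/(p-1)! dθ. -/
open NormedSpace intervalIntegral

set_option synthInstance.maxHeartbeats 1000000
set_option maxHeartbeats 1000000

/-- Key lemma: difference of exponentials bound via the variation-of-constants trick. -/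
lemma exp_diff_bound {X : Type*} [NormedAddCommGroup X] [NormedSpace ℝ X] [CompleteSpace X]
    (A Ahat : X →L[ℝ] X) (M s : ℝ) (hs : 0 ≤ s) (hM : 0 ≤ M)
    (hA : ∀ t ∈ Set.Icc (0:ℝ) s, ‖NormedSpace.exp (t • A)‖ ≤ M)
    (hAhat : ∀ t ∈ Set.Icc (0:ℝ) s, ‖NormedSpace.exp (t • Ahat)‖ ≤ M) :
    ‖NormedSpace.exp (s • A) - NormedSpace.exp (s • Ahat)‖
      ≤ M * M * s * ‖A - Ahat‖ := by
  set f : ℝ → (X →L[ℝ] X) := fun τ =>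
    NormedSpace.exp ((s - τ) • A) * NormedSpace.exp (τ • Ahat) with hf
  set f' : ℝ → (X →L[ℝ] X) := fun τ =>
    NormedSpace.exp ((s - τ) • A) * (Ahat - A) * NormedSpace.exp (τ • Ahat) with hf'
  have hderiv : ∀ τ : ℝ, HasDerivAt f (f' τ) τ := by
    intro τ
    have hu : HasDerivAt (fun τ : ℝ => NormedSpace.exp ((s - τ) • A))
        ((-1 : ℝ) • (A * NormedSpace.exp ((s - τ) • A))) τ := by
      have h1 : HasDerivAt (fun τ : ℝ => s - τ) (-1) τ :=
        (hasDerivAt_id τ).const_sub s |>.congr_deriv rfl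
      exact (hasDerivAt_exp_smul_const' A (s - τ)).scomp τ h1
    have hv : HasDerivAt (fun τ : ℝ => NormedSpace.exp (τ • Ahat))
        (Ahat * NormedSpace.exp (τ • Ahat)) τ := hasDerivAt_exp_smul_const' Ahat τ
    have := hu.mul hv
    refine this.congr_deriv ?_
    have hcomm : A * NormedSpace.exp ((s - τ) • A)
        = NormedSpace.exp ((s - τ) • A) * A := by
      have : Commute ((s - τ) • A) A := (Commute.refl A).smul_left _
      exact this.exp_left.symm.eq
    simp only [hf', neg_one_smul, hcomm]
    noncomm_ring
  have hbound : ∀ τ ∈ Set.Icc (0:ℝ) s, ‖f' τ‖ ≤ M * M * ‖A - Ahat‖ := by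
    intro τ hτ
    obtain ⟨hτ0, hτs⟩ := hτ
    have h1 : ‖NormedSpace.exp ((s - τ) • A)‖ ≤ M :=
      hA (s - τ) ⟨by linarith, by linarith⟩
    have h2 : ‖NormedSpace.exp (τ • Ahat)‖ ≤ M := hAhat τ ⟨hτ0, hτs⟩
    calc ‖f' τ‖ ≤ ‖NormedSpace.exp ((s - τ) • A) * (Ahat - A)‖
          * ‖NormedSpace.exp (τ • Ahat)‖ := norm_mul_le _ _
      _ ≤ (‖NormedSpace.exp ((s - τ) • A)‖ * ‖Ahat - A‖)
          * ‖NormedSpace.exp (τ • Ahat)‖ := by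
          gcongr; exact norm_mul_le _ _
      _ ≤ (M * ‖Ahat - A‖) * M := by
          gcongr
      _ = M * M * ‖A - Ahat‖ := by rw [norm_sub_rev]; ring
  have hmvt := Convex.norm_image_sub_le_of_norm_hasDerivWithin_le
    (f := f) (f' := f') (C := M * M * ‖A - Ahat‖) (s := Set.Icc (0:ℝ) s)
    (fun τ hτ => (hderiv τ).hasDerivWithinAt) hbound (convex_Icc 0 s)
    (Set.left_mem_Icc.2 hs) (Set.right_mem_Icc.2 hs)
  have hf0 : f 0 = NormedSpace.exp (s • A) := by
    simp [hf, NormedSpace.exp_zero]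
  have hfs : f s = NormedSpace.exp (s • Ahat) := by
    simp [hf, NormedSpace.exp_zero]
  calc ‖NormedSpace.exp (s • A) - NormedSpace.exp (s • Ahat)‖
      = ‖f s - f 0‖ := by rw [hf0, hfs, norm_sub_rev]
    _ ≤ M * M * ‖A - Ahat‖ * ‖s - 0‖ := hmvt
    _ = M * M * s * ‖A - Ahat‖ := by
        rw [sub_zero, Real.norm_of_nonneg hs]; ring

noncomputable def phiOp {X : Type*} [NormedAddCommGroup X] [NormedSpace ℝ X] [CompleteSpace X]
    (p : ℕ) (A : X →L[ℝ] X) : X →L[ℝ] X :=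
  if p = 0 then NormedSpace.exp A
  else ∫ θ in (0:ℝ)..1,
    ((θ ^ (p - 1) / (Nat.factorial (p-1) : ℝ)) • NormedSpace.exp ((1 - θ) • A))

theorem phiOp_diff_bound {X : Type*} [NormedAddCommGroup X] [NormedSpace ℝ X] [CompleteSpace X]
    (A Ahat : X →L[ℝ] X) (M h : ℝ) (hM : 1 ≤ M) (hh : 0 < h)
    (hA : ∀ t ∈ Set.Icc (0:ℝ) h, ‖NormedSpace.exp (t • A)‖ ≤ M)
    (hAhat : ∀ t ∈ Set.Icc (0:ℝ) h, ‖NormedSpace.exp (t • Ahat)‖ ≤ M)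
    (p : ℕ) (hp : 1 ≤ p) :
    ‖phiOp p (h • A) - phiOp p (h • Ahat)‖
      ≤ M ^ 2 * h * ‖A - Ahat‖ / (Nat.factorial (p - 1) : ℝ) := by
  have hp0 : p ≠ 0 := Nat.one_le_iff_ne_zero.mp hp
  have hM0 : (0:ℝ) ≤ M := le_trans zero_le_one hM
  have hfacpos : (0:ℝ) < (Nat.factorial (p-1) : ℝ) := by
    exact_mod_cast Nat.factorial_pos (p-1)
  set c : ℝ → ℝ := fun θ => θ ^ (p - 1) / (Nat.factorial (p-1) : ℝ) with hc
  have hcont1 : Continuous (fun θ : ℝ =>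
      c θ • NormedSpace.exp ((1 - θ) • (h • A))) := by
    exact ((continuous_pow (p-1)).div_const _).smul
      (continuous_iff_continuousAt.2 fun θ => by exact ((hasDerivAt_exp_smul_const' (h • A) (1 - θ)).scomp θ ((hasDerivAt_id θ).const_sub 1)).continuousAt)
  have hcont2 : Continuous (fun θ : ℝ =>
      c θ • NormedSpace.exp ((1 - θ) • (h • Ahat))) := by
    exact ((continuous_pow (p-1)).div_const _).smul
      (continuous_iff_continuousAt.2 fun θ => by exact ((hasDerivAt_exp_smul_const' (h • Ahat) (1 - θ)).scomp θ ((hasDerivAt_id θ).const_sub 1)).continuousAt)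
  have hint1 := hcont1.intervalIntegrable (μ := MeasureTheory.volume) (0:ℝ) 1
  have hint2 := hcont2.intervalIntegrable (μ := MeasureTheory.volume) (0:ℝ) 1
  have hsplit : phiOp p (h • A) - phiOp p (h • Ahat)
      = ∫ θ in (0:ℝ)..1, (c θ • NormedSpace.exp ((1 - θ) • (h • A))
          - c θ • NormedSpace.exp ((1 - θ) • (h • Ahat))) := by
    rw [phiOp, phiOp, if_neg hp0, if_neg hp0, intervalIntegral.integral_sub hint1 hint2]
  rw [hsplit]
  have key : ∀ θ ∈ Set.uIoc (0:ℝ) 1,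
      ‖c θ • NormedSpace.exp ((1 - θ) • (h • A))
        - c θ • NormedSpace.exp ((1 - θ) • (h • Ahat))‖
      ≤ M ^ 2 * h * ‖A - Ahat‖ / (Nat.factorial (p - 1) : ℝ) := by
    intro θ hθ
    rw [Set.uIoc_of_le zero_le_one] at hθ
    obtain ⟨hθ0, hθ1⟩ := hθ
    have h1θ : (0:ℝ) ≤ 1 - θ := by linarith
    have hs0 : (0:ℝ) ≤ (1 - θ) * h := mul_nonneg h1θ hh.le
    have hsh : (1 - θ) * h ≤ h := by nlinarith
    have hsub : Set.Icc (0:ℝ) ((1-θ)*h) ⊆ Set.Icc (0:ℝ) h :=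
      Set.Icc_subset_Icc le_rfl hsh
    have hdiff : ‖NormedSpace.exp (((1-θ)*h) • A)
        - NormedSpace.exp (((1-θ)*h) • Ahat)‖
        ≤ M * M * ((1-θ)*h) * ‖A - Ahat‖ :=
      exp_diff_bound A Ahat M ((1-θ)*h) hs0 hM0
        (fun t ht => hA t (hsub ht)) (fun t ht => hAhat t (hsub ht))
    have hsmul1 : (1 - θ) • (h • A) = ((1-θ)*h) • A := smul_smul _ _ _
    have hsmul2 : (1 - θ) • (h • Ahat) = ((1-θ)*h) • Ahat := smul_smul _ _ _
    rw [← smul_sub, norm_smul, hsmul1, hsmul2]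
    have hcθ : ‖c θ‖ ≤ 1 / (Nat.factorial (p-1) : ℝ) := by
      rw [hc, Real.norm_of_nonneg (by positivity)]
      exact div_le_div₀ zero_le_one (pow_le_one₀ hθ0.le hθ1) hfacpos le_rfl
    calc ‖c θ‖ * ‖NormedSpace.exp (((1-θ)*h) • A)
          - NormedSpace.exp (((1-θ)*h) • Ahat)‖
        ≤ (1 / (Nat.factorial (p-1) : ℝ)) * (M * M * ((1-θ)*h) * ‖A - Ahat‖) := by
          apply mul_le_mul hcθ hdiff (norm_nonneg _) (by positivity)
      _ ≤ (1 / (Nat.factorial (p-1) : ℝ)) * (M * M * h * ‖A - Ahat‖) := by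
          apply mul_le_mul_of_nonneg_left ?_ (one_div_nonneg.2 hfacpos.le)
          apply mul_le_mul_of_nonneg_right ?_ (norm_nonneg _)
          exact mul_le_mul_of_nonneg_left hsh (mul_nonneg hM0 hM0)
      _ = M ^ 2 * h * ‖A - Ahat‖ / (Nat.factorial (p - 1) : ℝ) := by
          ring
  calc ‖∫ θ in (0:ℝ)..1, (c θ • NormedSpace.exp ((1 - θ) • (h • A))
        - c θ • NormedSpace.exp ((1 - θ) • (h • Ahat)))‖
      ≤ (M ^ 2 * h * ‖A - Ahat‖ / (Nat.factorial (p - 1) : ℝ)) * |(1:ℝ) - 0| :=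
        intervalIntegral.norm_integral_le_of_norm_le_const key
    _ = M ^ 2 * h * ‖A - Ahat‖ / (Nat.factorial (p - 1) : ℝ) := by norm_num
end

section
/- Define ū_{n_2} = û_n + h φ_2(hĴ_n) û'_n and ū_{n_3} = û_n + h Ĵ_n ū_{n_2} + h ĝ_n(û_n), where û'_n = ĝ_n(û_n) + Ĵ_n û_n and Ĵ_n û'_n = û''_n. Then ū_{n_3} − 2ū_{n_2} + û_n = (h²/6) û''_n + h³ (φ_3(hĴ_n) − 2φ_4(hĴ_n)) Ĵ_n û''_n = (h²/6) û''_n + O(h³). -/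
open NormedSpace intervalIntegral

set_option linter.unusedSectionVars false
set_option maxHeartbeats 1000000
set_option synthInstance.maxHeartbeats 200000

section aux
variable {X : Type*} [NormedAddCommGroup X] [NormedSpace ℝ X] [CompleteSpace X]

lemma expDeriv (A : X →L[ℝ] X) (θ : ℝ) :
    HasDerivAt (fun θ : ℝ => exp ((1 - θ) • A)) (-(A * exp ((1 - θ) • A))) θ := by
  have h1 : HasDerivAt (fun θ : ℝ => 1 - θ) (-1 : ℝ) θ := by
    simpa using (hasDerivAt_id θ).const_sub 1
  have := HasDerivAt.scomp (𝕜 := ℝ) θ (hasDerivAt_exp_smul_const' A (1 - θ)) h1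
  simpa [Function.comp_def] using this

lemma expCont (A : X →L[ℝ] X) : Continuous (fun θ : ℝ => exp ((1 - θ) • A)) :=
  continuous_iff_continuousAt.2 fun θ => (expDeriv A θ).continuousAt

lemma exp_comm (A : X →L[ℝ] X) (s : ℝ) : A * exp (s • A) = exp (s • A) * A := by
  have hc : Commute A (s • A) := by
    unfold Commute SemiconjBy
    rw [mul_smul_comm, smul_mul_assoc]
  exact (hc.exp_right).eq

lemma phiOp_comm (A : X →L[ℝ] X) (p : ℕ) : A * phiOp p A = phiOp p A * A := by
  unfold phiOp
  split
  · exact ((Commute.refl A).exp_right).eq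
  · have cont : Continuous (fun θ : ℝ => (θ ^ (p-1) / ((p-1).factorial : ℝ)) • exp ((1 - θ) • A)) :=
      ((continuous_pow (p-1)).div_const _).smul (expCont A)
    have int := cont.intervalIntegrable (μ := MeasureTheory.volume) 0 1
    have hL := (ContinuousLinearMap.mul ℝ (X →L[ℝ] X) A).intervalIntegral_comp_comm int
    have hR := ((ContinuousLinearMap.mul ℝ (X →L[ℝ] X)).flip A).intervalIntegral_comp_comm int
    simp only [ContinuousLinearMap.mul_apply', ContinuousLinearMap.flip_apply] at hL hR
    rw [← hL, ← hR]
    congr 1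
    ext θ
    simp [mul_smul_comm, smul_mul_assoc, exp_comm]

lemma phiOp_rec (A : X →L[ℝ] X) (p : ℕ) (hp : 1 ≤ p) :
    phiOp p A = ((p.factorial : ℝ))⁻¹ • (1 : X →L[ℝ] X) + A * phiOp (p+1) A := by
  obtain ⟨q, rfl⟩ : ∃ q, p = q + 1 := ⟨p - 1, by omega⟩
  have key : ∀ θ : ℝ, HasDerivAt
      (fun θ : ℝ => (θ ^ (q+1) / ((q+1).factorial : ℝ)) • exp ((1 - θ) • A))
      ((θ ^ q / (q.factorial : ℝ)) • exp ((1 - θ) • A)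
        - (θ ^ (q+1) / ((q+1).factorial : ℝ)) • (A * exp ((1 - θ) • A))) θ := by
    intro θ
    have hc : HasDerivAt (fun θ : ℝ => θ ^ (q+1) / ((q+1).factorial : ℝ))
        (θ ^ q / (q.factorial : ℝ)) θ := by
      have h1 := (hasDerivAt_pow (q+1) θ).div_const ((q+1).factorial : ℝ)
      refine h1.congr_deriv ?_
      have hq : (q.factorial : ℝ) ≠ 0 := Nat.cast_ne_zero.2 q.factorial_ne_zero
      rw [Nat.factorial_succ]
      push_cast
      field_simp
    have := hc.smul (expDeriv A θ)
    refine this.congr_deriv ?_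
    simp [smul_sub, sub_eq_add_neg, add_comm]
  have cont1 : Continuous (fun θ : ℝ => (θ ^ q / (q.factorial : ℝ)) • exp ((1 - θ) • A)) :=
    ((continuous_pow q).div_const _).smul (expCont A)
  have cont2 : Continuous
      (fun θ : ℝ => (θ ^ (q+1) / ((q+1).factorial : ℝ)) • (A * exp ((1 - θ) • A))) :=
    ((continuous_pow (q+1)).div_const _).smul (continuous_const.mul (expCont A))
  have cont3 : Continuous (fun θ : ℝ => (θ ^ (q+1) / ((q+1).factorial : ℝ)) • exp ((1 - θ) • A)) :=
    ((continuous_pow (q+1)).div_const _).smul (expCont A)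
  have int1 := cont1.intervalIntegrable (μ := MeasureTheory.volume) 0 1
  have int2 := cont2.intervalIntegrable (μ := MeasureTheory.volume) 0 1
  have int3 := cont3.intervalIntegrable (μ := MeasureTheory.volume) 0 1
  have ftc := intervalIntegral.integral_eq_sub_of_hasDerivAt (a := (0:ℝ)) (b := 1)
      (fun θ _ => key θ) (int1.sub int2)
  rw [intervalIntegral.integral_sub int1 int2] at ftc
  simp only [one_pow, zero_pow (Nat.succ_ne_zero q), zero_div, zero_smul, sub_zero, sub_self,
    smul_zero, NormedSpace.exp_zero] at ftc
  have h2 : (∫ θ in (0:ℝ)..1, (θ ^ (q+1) / ((q+1).factorial : ℝ)) • (A * exp ((1 - θ) • A)))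
      = A * ∫ θ in (0:ℝ)..1, (θ ^ (q+1) / ((q+1).factorial : ℝ)) • exp ((1 - θ) • A) := by
    have := (ContinuousLinearMap.mul ℝ (X →L[ℝ] X) A).intervalIntegral_comp_comm int3
    simp only [ContinuousLinearMap.mul_apply'] at this
    rw [← this]
    congr 1; ext θ; simp [mul_smul_comm]
  rw [h2] at ftc
  simp only [phiOp, Nat.succ_ne_zero, if_neg, Nat.add_sub_cancel]
  rw [one_div, sub_eq_iff_eq_add] at ftc
  exact ftc

lemma phiOp_rec_apply (A : X →L[ℝ] X) (p : ℕ) (hp : 1 ≤ p) (x : X) :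
    phiOp p A x = ((p.factorial : ℝ))⁻¹ • x + A (phiOp (p+1) A x) := by
  conv_lhs => rw [phiOp_rec A p hp]
  rfl

lemma phiOp_comm_apply (A : X →L[ℝ] X) (p : ℕ) (x : X) :
    A (phiOp p A x) = phiOp p A (A x) := by
  have := congrArg (fun T : X →L[ℝ] X => T x) (phiOp_comm A p)
  simpa using this

end aux

theorem second_difference_expansion
    {X : Type*} [NormedAddCommGroup X] [NormedSpace ℝ X] [CompleteSpace X]
    (Jhat : X →L[ℝ] X) (ghat : X → X) (uhat : X) (h : ℝ) (hh : 0 < h) :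
    let uhat' := ghat uhat + Jhat uhat
    let uhat'' := Jhat uhat'
    let u2 := uhat + h • (phiOp 2 (h • Jhat)) uhat'
    let u3 := uhat + h • Jhat u2 + h • ghat uhat
    u3 - 2 • u2 + uhat
      = (h ^ 2 / 6) • uhat''
        + (h ^ 3) • ((phiOp 3 (h • Jhat) - 2 • phiOp 4 (h • Jhat)) (Jhat uhat'')) := by
  intro uhat' uhat'' u2 u3
  set A := h • Jhat with hA
  -- Jhat commutes with phiOp p A
  have Jcomm : ∀ p x, Jhat (phiOp p A x) = phiOp p A (Jhat x) := by
    intro p x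
    have := phiOp_comm_apply A p x
    simp only [hA, ContinuousLinearMap.smul_apply, map_smul] at this
    exact smul_right_injective X (ne_of_gt hh) this
  have r2 := phiOp_rec_apply A 2 (by norm_num) uhat'
  have r3 := phiOp_rec_apply A 3 (by norm_num) uhat'
  have hAap : ∀ x, A x = h • Jhat x := fun x => rfl
  show uhat + h • Jhat u2 + h • ghat uhat - 2 • u2 + uhat = _
  have hu2 : u2 = uhat + h • ((2:ℝ)⁻¹ • uhat' + h • Jhat (phiOp 3 A uhat')) := by
    show uhat + h • (phiOp 2 A) uhat' = _
    rw [r2, hAap]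
    norm_num
  have hJa : Jhat (phiOp 3 A uhat') = phiOp 3 A uhat'' := Jcomm 3 uhat'
  have hJ3 : Jhat (Jhat (phiOp 3 A uhat')) = phiOp 3 A (Jhat uhat'') := by
    rw [Jcomm, Jcomm]
  have hJ3' : phiOp 3 A uhat'' = (6:ℝ)⁻¹ • uhat'' + h • phiOp 4 A (Jhat uhat'') := by
    rw [phiOp_rec_apply A 3 (by norm_num) uhat'', hAap, Jcomm]
    norm_num [Nat.factorial]
  rw [hu2]
  have huu : uhat'' = Jhat uhat' := rfl
  simp only [two_smul, map_add, map_smul]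
  rw [hJ3, hJa, hJ3', huu]
  have hJu : Jhat uhat = uhat' - ghat uhat := by simp [uhat']
  simp only [ContinuousLinearMap.sub_apply, ContinuousLinearMap.smul_apply, two_smul,
    ContinuousLinearMap.add_apply, hJu, map_sub, map_add]
  module
end

section
/- Discrete Gronwall lemma: let (e_n) be nonnegative reals with e_0 = 0 and e_n ≤ C Σ_{j=0}^{n-1} h (h e_j + e_j² + h^q) for all n with nh ≤ T, where q ≥ 1 and C, h, T > 0. Then for h sufficiently small there exists a constant K depending only on C, T, q such that e_n ≤ K h^q for all n with nh ≤ T. -/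
namespace Paper

theorem discrete_gronwall (C T : ℝ) (q : ℕ) (hC : 0 < C) (hT : 0 < T) (hq : 1 ≤ q) :
    ∃ h0 > 0, ∃ K > 0, ∀ h : ℝ, 0 < h → h ≤ h0 →
      ∀ e : ℕ → ℝ, (∀ n, 0 ≤ e n) → e 0 = 0 →
        (∀ n : ℕ, (n : ℝ) * h ≤ T →
          e n ≤ C * ∑ j ∈ Finset.range n, h * (h * e j + (e j) ^ 2 + h ^ q)) →
        ∀ n : ℕ, (n : ℝ) * h ≤ T → e n ≤ K * h ^ q := by
  set K : ℝ := 2 * C * T with hKdef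
  have hKpos : 0 < K := by positivity
  have hKK : 0 < K + K ^ 2 := by positivity
  refine ⟨min 1 (1 / (K + K ^ 2)), by positivity, K, hKpos, ?_⟩
  intro h hh hh0 e he he0 hrec n
  induction n using Nat.strong_induction_on with
  | _ n ih =>
    intro hnT
    have h1 : h ≤ 1 := le_trans hh0 (min_le_left _ _)
    have h2 : h * (K + K ^ 2) ≤ 1 := by
      have h3 : h ≤ 1 / (K + K ^ 2) := le_trans hh0 (min_le_right _ _)
      have := mul_le_mul_of_nonneg_right h3 hKK.le
      rwa [one_div, inv_mul_cancel₀ hKK.ne'] at this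
    have hhq : h ^ q ≤ h := by
      calc h ^ q ≤ h ^ 1 := pow_le_pow_of_le_one hh.le h1 hq
        _ = h := pow_one h
    have hhqpos : 0 < h ^ q := pow_pos hh q
    have hterm : ∀ j ∈ Finset.range n,
        h * (h * e j + (e j) ^ 2 + h ^ q) ≤ h * (h ^ q * (1 + (K + K ^ 2) * h)) := by
      intro j hj
      rw [Finset.mem_range] at hj
      have hjT : (j : ℝ) * h ≤ T := by
        have : (j : ℝ) ≤ n := Nat.cast_le.mpr hj.le
        nlinarith
      have hej := ih j hj hjT
      have hejnn := he j
      have a1 : h * e j ≤ h * (K * h ^ q) := mul_le_mul_of_nonneg_left hej hh.le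
      have a2 : e j ^ 2 ≤ (K * h ^ q) ^ 2 := by nlinarith
      have a3 : K ^ 2 * h ^ q * h ^ q ≤ K ^ 2 * h ^ q * h :=
        mul_le_mul_of_nonneg_left hhq (mul_nonneg (sq_nonneg K) hhqpos.le)
      have inner : h * e j + e j ^ 2 + h ^ q ≤ h ^ q * (1 + (K + K ^ 2) * h) := by
        nlinarith [a1, a2, a3]
      exact mul_le_mul_of_nonneg_left inner hh.le
    have hsum : ∑ j ∈ Finset.range n, h * (h * e j + (e j) ^ 2 + h ^ q)
        ≤ (n : ℝ) * (h * (h ^ q * (1 + (K + K ^ 2) * h))) := by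
      calc ∑ j ∈ Finset.range n, h * (h * e j + (e j) ^ 2 + h ^ q)
          ≤ ∑ _j ∈ Finset.range n, h * (h ^ q * (1 + (K + K ^ 2) * h)) :=
            Finset.sum_le_sum hterm
        _ = (n : ℝ) * (h * (h ^ q * (1 + (K + K ^ 2) * h))) := by
            rw [Finset.sum_const, Finset.card_range, nsmul_eq_mul]
    have hbound := le_trans (hrec n hnT) (mul_le_mul_of_nonneg_left hsum hC.le)
    have hnh : 0 ≤ (n : ℝ) * h := by positivity
    have e1 : 1 + (K + K ^ 2) * h ≤ 2 := by nlinarith [h2]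
    have e0 : 0 ≤ 1 + (K + K ^ 2) * h := by nlinarith [mul_pos hKK hh]
    have e2 : (n : ℝ) * h * (1 + (K + K ^ 2) * h) ≤ T * 2 :=
      mul_le_mul hnT e1 e0 hT.le
    have e3 : (n : ℝ) * h * (1 + (K + K ^ 2) * h) * h ^ q ≤ T * 2 * h ^ q :=
      mul_le_mul_of_nonneg_right e2 hhqpos.le
    calc e n ≤ C * ((n : ℝ) * (h * (h ^ q * (1 + (K + K ^ 2) * h)))) := hbound
      _ = C * ((n : ℝ) * h * (1 + (K + K ^ 2) * h) * h ^ q) := by ring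
      _ ≤ C * (T * 2 * h ^ q) := mul_le_mul_of_nonneg_left e3 hC.le
      _ = K * h ^ q := by rw [hKdef]; ring
end Paper
end
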